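/- Let 𝕋 := ℝ/ℤ and α ∈ 𝕋. Let 0 < λ < 1, 0 < ρ < 1 with ρ² < λ, let M > 0 and 0 < r ≤ 1. Let a : 𝕋 → ℂ satisfy |a(θ)| = λ for all θ, and let f be a family of maps f_θ : ℂ → ℂ such that |f_θ(z) − a(θ)·z| ≤ M·|z|² whenever |z| ≤ r, and such that the forward compositions f_θ^n := f_{θ+(n−1)α} ∘ ⋯ ∘ f_θ satisfy |f_θ^n(z)| ≤ ρ^n·|z| for all n ≥ 0, all θ, and all |z| ≤ r. Define A_n(θ) := ∏_{j=0}^{n−1} a(θ + jα) and g_θ^n(z) := f_θ^n(z) / A_n(θ). Then: (1) for every θ ∈ 𝕋 and |z| ≤ r the sequence (g_θ^n(z))_n converges, uniformly in (θ, z), to a limit g_θ(z); (2) |g_θ(z) − z| ≤ M·|z|² / (λ − ρ²) for all θ and |z| ≤ r (in particular g_θ(0) = 0); and (3) g_{θ+α}(f_θ(z)) = a(θ)·g_θ(z) for all θ and |z| ≤ r. -/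

import Mathlib

/-- The `n`-th fiber iterate of a quasiperiodically forced system over the rotation by
`α`: `fiberIter α f n θ = f_{θ+(n−1)α} ∘ ⋯ ∘ f_{θ+α} ∘ f_θ` (with `fiberIter α f 0 θ = id`). -/
noncomputable def fiberIter (α : UnitAddCircle) (f : UnitAddCircle → ℂ → ℂ) :
    ℕ → UnitAddCircle → ℂ → ℂ
  | 0 => fun _ z => z
  | n + 1 => fun θ z => fiberIter α f n (θ + α) (f θ z)

lemma fiberIter_succ_left (α : UnitAddCircle) (f : UnitAddCircle → ℂ → ℂ) (n : ℕ)
    (θ : UnitAddCircle) (z : ℂ) :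
    fiberIter α f (n + 1) θ z = fiberIter α f n (θ + α) (f θ z) := rfl

lemma fiberIter_zero (α : UnitAddCircle) (f : UnitAddCircle → ℂ → ℂ)
    (θ : UnitAddCircle) (z : ℂ) : fiberIter α f 0 θ z = z := rfl

lemma fiberIter_succ_right (α : UnitAddCircle) (f : UnitAddCircle → ℂ → ℂ) :
    ∀ (n : ℕ) (θ : UnitAddCircle) (z : ℂ),
      fiberIter α f (n + 1) θ z = f (θ + n • α) (fiberIter α f n θ z) := by
  intro n
  induction n with
  | zero => intro θ z; simp [fiberIter]
  | succ n ih =>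
    intro θ z
    rw [fiberIter_succ_left, ih, ← fiberIter_succ_left]
    have h : θ + α + n • α = θ + (n + 1) • α := by rw [succ_nsmul]; abel
    rw [h]

/-- Fibered Koenigs linearization: the normalized iterates
`g_θ^n(z) = f_θ^n(z) / ∏_{j<n} a(θ+jα)` converge uniformly on `{|z| ≤ r}` to a fibered
map `g` with `|g_θ(z) − z| ≤ M|z|²/(λ − ρ²)` satisfying `g_{θ+α}(f_θ(z)) = a(θ)·g_θ(z)`. -/
theorem fibered_koenigs
    (α : UnitAddCircle) (lam ρ M r : ℝ)
    (hl0 : 0 < lam) (hl1 : lam < 1) (hρ0 : 0 < ρ) (hρ1 : ρ < 1) (hρlam : ρ ^ 2 < lam)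
    (hM : 0 < M) (hr0 : 0 < r) (hr1 : r ≤ 1)
    (a : UnitAddCircle → ℂ) (ha : ∀ θ, ‖a θ‖ = lam)
    (f : UnitAddCircle → ℂ → ℂ)
    (hf : ∀ θ z, ‖z‖ ≤ r →
      ‖f θ z - a θ * z‖ ≤ M * ‖z‖ ^ 2)
    (hit : ∀ (n : ℕ) (θ : UnitAddCircle) (z : ℂ), ‖z‖ ≤ r →
      ‖fiberIter α f n θ z‖ ≤ ρ ^ n * ‖z‖) :
    ∃ g : UnitAddCircle → ℂ → ℂ,
      TendstoUniformlyOn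
        (fun (n : ℕ) (p : UnitAddCircle × ℂ) =>
          fiberIter α f n p.1 p.2 / ∏ j ∈ Finset.range n, a (p.1 + j • α))
        (fun p => g p.1 p.2) Filter.atTop {p : UnitAddCircle × ℂ | ‖p.2‖ ≤ r}
      ∧ (∀ θ z, ‖z‖ ≤ r →
          ‖g θ z - z‖ ≤ M * ‖z‖ ^ 2 / (lam - ρ ^ 2))
      ∧ ∀ θ z, ‖z‖ ≤ r → g (θ + α) (f θ z) = a θ * g θ z := by
  classical
  set s : Set (UnitAddCircle × ℂ) := {p : UnitAddCircle × ℂ | ‖p.2‖ ≤ r} with hs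
  set q : ℝ := ρ ^ 2 / lam with hqdef
  have hq0 : (0:ℝ) ≤ q := by positivity
  have hq1 : q < 1 := (div_lt_one hl0).2 hρlam
  have hlamρ : (0:ℝ) < lam - ρ ^ 2 := by linarith
  have hane : ∀ θ, a θ ≠ 0 := by
    intro θ h
    have := ha θ
    rw [h] at this
    simp at this
    exact absurd this.symm (ne_of_gt hl0)
  set A : ℕ → UnitAddCircle → ℂ := fun n θ => ∏ j ∈ Finset.range n, a (θ + j • α) with hAdef
  have hAabs : ∀ n θ, ‖A n θ‖ = lam ^ n := by
    intro n θ
    simp only [hAdef, norm_prod, ha, Finset.prod_const, Finset.card_range]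
  have hAne : ∀ n θ, A n θ ≠ 0 := by
    intro n θ h
    have h2 := hAabs n θ
    rw [h, norm_zero] at h2
    exact absurd h2.symm (pow_ne_zero n (ne_of_gt hl0))
  have hAsucc : ∀ n θ, A (n+1) θ = A n θ * a (θ + n • α) := by
    intro n θ; simp only [hAdef]; exact Finset.prod_range_succ _ n
  have hAshift : ∀ n θ, A (n+1) θ = A n (θ + α) * a θ := by
    intro n θ
    simp only [hAdef]
    rw [Finset.prod_range_succ']
    congr 1
    · apply Finset.prod_congr rfl
      intro j _
      congr 1
      rw [succ_nsmul]
      abel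
    · congr 1
      simp
  set G : ℕ → UnitAddCircle × ℂ → ℂ := fun n p => fiberIter α f n p.1 p.2 / A n p.1 with hGdef
  have hG0 : ∀ p : UnitAddCircle × ℂ, G 0 p = p.2 := by
    intro p; simp [hGdef, hAdef, fiberIter_zero]
  set d : ℕ → UnitAddCircle × ℂ → ℂ := fun n p => G (n+1) p - G n p with hddef
  -- key pointwise bound on the differences
  have hdbound : ∀ (n : ℕ) (p : UnitAddCircle × ℂ), p ∈ s →
      ‖d n p‖ ≤ M * ‖p.2‖ ^ 2 / lam * q ^ n := by
    rintro n ⟨θ, z⟩ hz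
    simp only [hs, Set.mem_setOf_eq] at hz
    have hw := hit n θ z hz
    have hρn1 : ρ ^ n ≤ 1 := pow_le_one₀ hρ0.le hρ1.le
    have habsz : 0 ≤ ‖z‖ := norm_nonneg z
    have hwr : ‖fiberIter α f n θ z‖ ≤ r := by nlinarith
    have hstep := hf (θ + n • α) _ hwr
    have hdiff : d n (θ, z) =
        (f (θ + n • α) (fiberIter α f n θ z) - a (θ + n • α) * fiberIter α f n θ z)
          / A (n+1) θ := by
      simp only [hddef, hGdef]
      rw [fiberIter_succ_right, hAsucc]
      have h1 := hAne n θ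
      have h2 := hane (θ + n • α)
      field_simp
    rw [hdiff, norm_div, hAabs]
    have h1 : ‖f (θ + n • α) (fiberIter α f n θ z)
        - a (θ + n • α) * fiberIter α f n θ z‖ ≤ M * (ρ ^ n * ‖z‖) ^ 2 := by
      refine hstep.trans ?_
      have h2 : ‖fiberIter α f n θ z‖ ^ 2 ≤ (ρ ^ n * ‖z‖) ^ 2 :=
        pow_le_pow_left₀ (norm_nonneg _) hw 2
      nlinarith
    have heq : M * (ρ ^ n * ‖z‖) ^ 2 / lam ^ (n+1)
        = M * ‖z‖ ^ 2 / lam * q ^ n := by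
      rw [hqdef, div_pow]
      field_simp
      ring
    calc ‖f (θ + n • α) (fiberIter α f n θ z)
          - a (θ + n • α) * fiberIter α f n θ z‖ / lam ^ (n+1)
        ≤ M * (ρ ^ n * ‖z‖) ^ 2 / lam ^ (n+1) := by
          gcongr
      _ = M * ‖z‖ ^ 2 / lam * q ^ n := heq
  -- uniform bound on s
  have hcb : ∀ (n : ℕ) (p : UnitAddCircle × ℂ), p ∈ s →
      ‖d n p‖ ≤ M / lam * q ^ n := by
    intro n p hp
    refine (hdbound n p hp).trans ?_
    have hz : ‖p.2‖ ≤ r := hp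
    have hz2 : ‖p.2‖ ^ 2 ≤ 1 := by nlinarith [norm_nonneg p.2]
    have hle : M * ‖p.2‖ ^ 2 / lam ≤ M * 1 / lam := by gcongr
    rw [mul_one] at hle
    have : M * ‖p.2‖ ^ 2 / lam ≤ M / lam := hle
    exact mul_le_mul_of_nonneg_right this (pow_nonneg hq0 n)
  have hsummc : Summable (fun n : ℕ => M / lam * q ^ n) :=
    (summable_geometric_of_lt_one hq0 hq1).mul_left _
  have hds : ∀ p ∈ s, Summable (fun n => d n p) := by
    intro p hp
    apply Summable.of_norm
    refine Summable.of_nonneg_of_le (fun n => norm_nonneg _) (fun n => ?_) hsummc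
    exact hcb n p hp
  set g : UnitAddCircle → ℂ → ℂ := fun θ z => z + ∑' n, d n (θ, z) with hgdef
  have htel : ∀ (n : ℕ) (p : UnitAddCircle × ℂ),
      ∑ k ∈ Finset.range n, d k p = G n p - p.2 := by
    intro n p
    simp only [hddef]
    rw [Finset.sum_range_sub (fun k => G k p) n, hG0]
  -- remainder bound
  have hrem : ∀ (n : ℕ) (p : UnitAddCircle × ℂ), p ∈ s →
      ‖g p.1 p.2 - G n p‖ ≤ M / lam * (1 - q)⁻¹ * q ^ n := by
    intro n p hp
    have hsum := hds p hp
    have h2 := hsum.sum_add_tsum_nat_add n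
    rw [htel] at h2
    have h3 : g p.1 p.2 - G n p = ∑' k, d (k + n) p := by
      simp only [hgdef]
      linear_combination -h2
    rw [h3]
    have hgs : HasSum (fun k : ℕ => M / lam * q ^ (k + n))
        (M / lam * (1 - q)⁻¹ * q ^ n) := by
      have h4 := (hasSum_geometric_of_lt_one hq0 hq1).mul_left (M / lam * q ^ n)
      have h5 : (fun k : ℕ => M / lam * q ^ (k + n))
          = fun k => M / lam * q ^ n * q ^ k := by
        funext k; rw [pow_add]; ring
      rw [h5]
      rw [show M / lam * (1 - q)⁻¹ * q ^ n = M / lam * q ^ n * (1 - q)⁻¹ by ring]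
      exact h4
    refine tsum_of_norm_bounded hgs (fun k => ?_)
    exact hcb (k + n) p hp
  have htu : TendstoUniformlyOn (fun n p => G n p) (fun p => g p.1 p.2)
      Filter.atTop s := by
    rw [Metric.tendstoUniformlyOn_iff]
    intro ε hε
    have hB : Filter.Tendsto (fun n : ℕ => M / lam * (1 - q)⁻¹ * q ^ n)
        Filter.atTop (nhds 0) := by
      have := tendsto_pow_atTop_nhds_zero_of_lt_one hq0 hq1
      simpa using this.const_mul (M / lam * (1 - q)⁻¹)
    filter_upwards [hB.eventually_lt_const hε] with n hn
    intro p hp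
    rw [dist_eq_norm]
    exact lt_of_le_of_lt (hrem n p hp) hn
  refine ⟨g, htu, ?_, ?_⟩
  · -- estimate
    intro θ z hz
    have hsum := hds (θ, z) hz
    have h3 : g θ z - z = ∑' n, d n (θ, z) := by simp only [hgdef]; ring
    rw [h3]
    have hgs : HasSum (fun n : ℕ => M * ‖z‖ ^ 2 / lam * q ^ n)
        (M * ‖z‖ ^ 2 / lam * (1 - q)⁻¹) :=
      (hasSum_geometric_of_lt_one hq0 hq1).mul_left _
    have hb : ‖∑' n, d n (θ, z)‖
        ≤ M * ‖z‖ ^ 2 / lam * (1 - q)⁻¹ := by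
      refine tsum_of_norm_bounded hgs (fun n => ?_)
      exact hdbound n (θ, z) hz
    refine hb.trans_eq ?_
    rw [hqdef]
    rw [show (1 : ℝ) - ρ ^ 2 / lam = (lam - ρ ^ 2) / lam by field_simp]
    field_simp
  · -- conjugacy
    intro θ z hz
    have h1 := hit 1 θ z hz
    have hf1 : fiberIter α f 1 θ z = f θ z := rfl
    rw [hf1, pow_one] at h1
    have habsz : 0 ≤ ‖z‖ := norm_nonneg z
    have hfz : ‖f θ z‖ ≤ r := by nlinarith
    have hmem1 : ((θ + α, f θ z) : UnitAddCircle × ℂ) ∈ s := hfz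
    have hmem2 : ((θ, z) : UnitAddCircle × ℂ) ∈ s := hz
    have hp1 := htu.tendsto_at hmem1
    have hp2 := htu.tendsto_at hmem2
    have hp3 : Filter.Tendsto (fun n => G (n+1) (θ, z)) Filter.atTop
        (nhds (g θ z)) := hp2.comp (Filter.tendsto_add_atTop_nat 1)
    have hid : ∀ n, G n (θ + α, f θ z) = a θ * G (n+1) (θ, z) := by
      intro n
      simp only [hGdef]
      rw [hAshift n θ]
      have h2 : fiberIter α f (n+1) θ z = fiberIter α f n (θ + α) (f θ z) :=
        fiberIter_succ_left α f n θ z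
      rw [h2]
      have h3 := hAne n (θ + α)
      have h4 := hane θ
      field_simp
    have hp1' : Filter.Tendsto (fun n => a θ * G (n+1) (θ, z)) Filter.atTop
        (nhds (g (θ + α) (f θ z))) := by
      simpa only [hid] using hp1
    have hp4 : Filter.Tendsto (fun n => a θ * G (n+1) (θ, z)) Filter.atTop
        (nhds (a θ * g θ z)) := hp3.const_mul _
    exact tendsto_nhds_unique hp1' hp4
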